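/- Let 0 ≤ R₀ < R₁, let a : ℤ → ℂ be a family of coefficients such that for every r with R₀ < r < R₁ the family (n ↦ ‖a(n)‖·rⁿ) is summable over ℤ, and let G(z) = ∑_{n∈ℤ} a(n)·zⁿ for z in the annulus A(R₀,R₁) = {z ∈ ℂ : R₀ < |z| < R₁}. Then G is holomorphic on A(R₀,R₁) and for every r with R₀ < r < R₁ its complex derivative G′ satisfies ∫₀^{2π} ‖G′(r·e^{iθ})‖² dθ = 2π·∑_{n∈ℤ} n²·‖a(n)‖²·r^{2n−2}. -/

import Mathlib

open Complex Real

section Aux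

/-- Comparison: product of a summable nonneg sequence with a summable nonneg sequence. -/
private lemma summable_mul_aux {b u : ℕ → ℝ} (hb : Summable b) (hb0 : ∀ k, 0 ≤ b k)
    (hu : Summable u) (hu0 : ∀ k, 0 ≤ u k) : Summable fun k => b k * u k := by
  refine Summable.of_nonneg_of_le (fun k => mul_nonneg (hb0 k) (hu0 k))
    (fun k => mul_le_mul_of_nonneg_right (hb.le_tsum k fun j _ => hb0 j) (hu0 k))
    (hu.mul_left _)

/-- `k * q^k` is summable for `0 ≤ q < 1`. -/
private lemma summable_k_mul_geo {q : ℝ} (hq0 : 0 ≤ q) (hq1 : q < 1) :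
    Summable fun k : ℕ => (k : ℝ) * q ^ k := by
  have := summable_pow_mul_geometric_of_norm_lt_one (R := ℝ) 1
    (r := q) (by rwa [Real.norm_eq_abs, _root_.abs_of_nonneg hq0])
  simpa using this

/-- Key summability: the derivative-type series `|n| ‖a n‖ r^n` is summable for
`r₀ < r < r₁` given summability at `r₀` and `r₁`. -/
private lemma summable_deriv_aux {a : ℤ → ℂ} {r₀ r r₁ : ℝ} (h0 : 0 < r₀) (h01 : r₀ < r)
    (h1 : r < r₁) (hs₀ : Summable (fun n : ℤ => ‖a n‖ * r₀ ^ n))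
    (hs₁ : Summable (fun n : ℤ => ‖a n‖ * r₁ ^ n)) :
    Summable (fun n : ℤ => |(n : ℝ)| * ‖a n‖ * r ^ n) := by
  have hr : 0 < r := h0.trans h01
  have hr₁ : 0 < r₁ := hr.trans h1
  apply Summable.of_nat_of_neg_add_one
  · -- positive part
    have hb : Summable fun k : ℕ => ‖a k‖ * r₁ ^ (k : ℤ) :=
      hs₁.comp_injective (fun x y h => by exact_mod_cast h)
    have hb0 : ∀ k : ℕ, 0 ≤ ‖a k‖ * r₁ ^ (k : ℤ) := fun k =>
      mul_nonneg (norm_nonneg _) (zpow_nonneg hr₁.le _)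
    have hu : Summable fun k : ℕ => (k : ℝ) * (r / r₁) ^ k :=
      summable_k_mul_geo (by positivity) ((div_lt_one hr₁).2 h1)
    have hu0 : ∀ k : ℕ, 0 ≤ (k : ℝ) * (r / r₁) ^ k := fun k => by positivity
    refine (summable_mul_aux hb hb0 hu hu0).congr fun k => ?_
    have hne : r₁ ^ k ≠ 0 := by positivity
    rw [zpow_natCast, zpow_natCast]
    rw [_root_.abs_of_nonneg (by positivity : (0:ℝ) ≤ ((k:ℤ):ℝ))]
    push_cast
    rw [div_pow]
    field_simp
  · -- negative part
    have hb : Summable fun k : ℕ => ‖a (-((k : ℤ) + 1))‖ * r₀ ^ (-((k : ℤ) + 1)) := by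
      have : Function.Injective fun k : ℕ => (-((k : ℤ) + 1)) := by
        intro x y h; simp only [neg_inj, add_left_inj] at h; exact_mod_cast h
      exact hs₀.comp_injective this
    have hb0 : ∀ k : ℕ, 0 ≤ ‖a (-((k : ℤ) + 1))‖ * r₀ ^ (-((k : ℤ) + 1)) := fun k =>
      mul_nonneg (norm_nonneg _) (zpow_nonneg h0.le _)
    have hu : Summable fun k : ℕ => ((k : ℝ) + 1) * (r₀ / r) ^ (k + 1) := by
      have h := summable_k_mul_geo (q := r₀ / r) (by positivity) ((div_lt_one hr).2 h01)
      have := (summable_nat_add_iff (f := fun k : ℕ => (k : ℝ) * (r₀ / r) ^ k) 1).2 h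
      refine this.congr fun k => ?_
      push_cast; ring
    have hu0 : ∀ k : ℕ, 0 ≤ ((k : ℝ) + 1) * (r₀ / r) ^ (k + 1) := fun k => by positivity
    refine (summable_mul_aux hb hb0 hu hu0).congr fun k => ?_
    have hcast : ((k : ℤ) + 1) = ((k + 1 : ℕ) : ℤ) := by push_cast; ring
    rw [hcast, zpow_neg, zpow_neg, zpow_natCast, zpow_natCast,
      show (((-((k + 1 : ℕ) : ℤ)) : ℤ) : ℝ) = -((k : ℝ) + 1) by push_cast; ring,
      abs_neg, _root_.abs_of_nonneg (by positivity : (0:ℝ) ≤ (k : ℝ) + 1)]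
    have hne : r₀ ^ (k + 1 : ℕ) ≠ 0 := by positivity
    have hne' : r ^ (k + 1 : ℕ) ≠ 0 := by positivity
    rw [div_pow]
    field_simp

end Aux


private lemma key_deriv {R₀ R₁ : ℝ} (hR₀ : 0 ≤ R₀) {a : ℤ → ℂ}
    (ha : ∀ r : ℝ, R₀ < r → r < R₁ → Summable (fun n : ℤ => ‖a n‖ * r ^ n))
    {G : ℂ → ℂ}
    (hG : ∀ z : ℂ, R₀ < ‖z‖ → ‖z‖ < R₁ → G z = ∑' n : ℤ, a n * z ^ n)
    {z : ℂ} (hz1 : R₀ < ‖z‖) (hz2 : ‖z‖ < R₁) :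
    DifferentiableAt ℂ G z ∧
      HasSum (fun n : ℤ => a n * ((n : ℂ) * z ^ (n - 1))) (deriv G z) := by
  have habs : 0 < ‖z‖ := lt_of_le_of_lt hR₀ hz1
  set s₀ := (R₀ + ‖z‖) / 2 with hs₀def
  set s₁ := (‖z‖ + R₁) / 2 with hs₁def
  have h1 : R₀ < s₀ := by rw [hs₀def]; linarith
  have h2 : s₀ < ‖z‖ := by rw [hs₀def]; linarith
  have h3 : ‖z‖ < s₁ := by rw [hs₁def]; linarith
  have h4 : s₁ < R₁ := by rw [hs₁def]; linarith
  have hs₀pos : 0 < s₀ := hR₀.trans_lt h1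
  set U : Set ℂ := {w | s₀ < ‖w‖ ∧ ‖w‖ < s₁} with hUdef
  have hU : IsOpen U := by
    have : U = (fun w : ℂ => ‖w‖) ⁻¹' Set.Ioo s₀ s₁ := rfl
    rw [this]
    exact isOpen_Ioo.preimage continuous_norm
  have hzU : z ∈ U := ⟨h2, h3⟩
  have hne : ∀ w ∈ U, w ≠ 0 := by
    intro w hw h0
    rw [h0] at hw
    simp only [hUdef, Set.mem_setOf_eq, norm_zero] at hw
    linarith [hw.1]
  have hFdiff : ∀ n : ℤ, DifferentiableOn ℂ (fun w : ℂ => a n * w ^ n) U := by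
    intro n w hw
    exact ((differentiableAt_zpow.2 (Or.inl (hne w hw))).const_mul _).differentiableWithinAt
  have hu : Summable (fun n : ℤ => ‖a n‖ * s₀ ^ n + ‖a n‖ * s₁ ^ n) :=
    (ha s₀ h1 (h2.trans hz2)).add (ha s₁ (hz1.trans h3) h4)
  have hF_le : ∀ (n : ℤ) (w : ℂ), w ∈ U →
      ‖a n * w ^ n‖ ≤ ‖a n‖ * s₀ ^ n + ‖a n‖ * s₁ ^ n := by
    intro n w hw
    simp only [norm_mul, norm_zpow]
    rcases le_or_gt 0 n with hn | hn
    · have hle : ‖w‖ ^ n ≤ s₁ ^ n := by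
        lift n to ℕ using hn
        rw [zpow_natCast, zpow_natCast]
        exact pow_le_pow_left₀ (norm_nonneg w) hw.2.le n
      have := mul_le_mul_of_nonneg_left hle (norm_nonneg (a n))
      have hpos : 0 ≤ ‖a n‖ * s₀ ^ n := by positivity
      linarith
    · have hle : ‖w‖ ^ n ≤ s₀ ^ n := by
        obtain ⟨m, rfl⟩ : ∃ m : ℕ, n = -((m : ℤ) + 1) :=
          ⟨(-n - 1).toNat, by omega⟩
        have hc : ((m : ℤ) + 1) = ((m + 1 : ℕ) : ℤ) := by push_cast; ring
        rw [hc, zpow_neg, zpow_neg, zpow_natCast, zpow_natCast]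
        have hape : (0:ℝ) < s₀ ^ (m + 1) := by positivity
        exact inv_anti₀ hape
          (pow_le_pow_left₀ hs₀pos.le hw.1.le (m + 1))
      have := mul_le_mul_of_nonneg_left hle (norm_nonneg (a n))
      have hpos : 0 ≤ ‖a n‖ * s₁ ^ n :=
        mul_nonneg (norm_nonneg _) (zpow_nonneg (habs.trans h3).le _)
      linarith
  have hf := differentiableOn_tsum_of_summable_norm hu hFdiff hU hF_le
  have hEq : Set.EqOn G (fun w : ℂ => ∑' n : ℤ, a n * w ^ n) U := fun w hw =>
    hG w (h1.trans hw.1) (hw.2.trans h4)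
  have hGf : G =ᶠ[nhds z] fun w : ℂ => ∑' n : ℤ, a n * w ^ n :=
    Filter.eventuallyEq_of_mem (hU.mem_nhds hzU) hEq
  have hdiff : DifferentiableAt ℂ G z :=
    ((hf z hzU).differentiableAt (hU.mem_nhds hzU)).congr_of_eventuallyEq hGf
  have hsum := hasSum_deriv_of_summable_norm hu hFdiff hU hF_le hzU
  have hderiv_term : ∀ n : ℤ,
      deriv (fun w : ℂ => a n * w ^ n) z = a n * ((n : ℂ) * z ^ (n - 1)) := by
    intro n
    rw [deriv_const_mul _ (differentiableAt_zpow.2 (Or.inl (hne z hzU))), deriv_zpow]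
  refine ⟨hdiff, ?_⟩
  rw [hGf.deriv_eq]
  simpa only [hderiv_term] using hsum


private lemma parseval {c : ℤ → ℂ} (hc : Summable fun n : ℤ => ‖c n‖) {h : ℝ → ℂ}
    (hh : ∀ θ : ℝ, HasSum
      (fun n : ℤ => c n * Complex.exp ((n : ℂ) * (θ : ℂ) * Complex.I)) (h θ)) :
    ∫ θ in (0:ℝ)..(2 * π), ‖h θ‖ ^ 2 = 2 * π * ∑' n : ℤ, ‖c n‖ ^ 2 := by
  have h2π0 : (0:ℝ) ≤ 2 * π := by positivity
  set F : ℤ × ℤ → ℝ → ℂ := fun p θ =>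
    c p.1 * (starRingEnd ℂ) (c p.2) *
      Complex.exp (((p.1 : ℂ) - (p.2 : ℂ)) * (θ : ℂ) * Complex.I) with hFdef
  have hexpnorm : ∀ (w : ℂ) (θ : ℝ), w.im = 0 → True := fun _ _ _ => trivial
  have hnorm1 : ∀ (x : ℤ) (θ : ℝ), ‖Complex.exp ((x : ℂ) * (θ : ℂ) * Complex.I)‖ = 1 := by
    intro x θ
    rw [show ((x : ℂ) * (θ : ℂ) * Complex.I) = (((x : ℝ) * θ : ℝ) : ℂ) * Complex.I by
      push_cast; ring]
    rw [Complex.norm_exp_ofReal_mul_I]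
  have hFsum : ∀ θ : ℝ, HasSum (fun p : ℤ × ℤ => F p θ) (((‖h θ‖ ^ 2 : ℝ)) : ℂ) := by
    intro θ
    have h1 := hh θ
    have h2 : HasSum (fun n : ℤ =>
        (starRingEnd ℂ) (c n * Complex.exp ((n : ℂ) * (θ : ℂ) * Complex.I)))
        ((starRingEnd ℂ) (h θ)) := hasSum_conj'.2 h1
    have hs1 : Summable fun n : ℤ => ‖c n * Complex.exp ((n : ℂ) * (θ : ℂ) * Complex.I)‖ := by
      refine hc.congr fun n => ?_
      rw [norm_mul, hnorm1, mul_one]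
    have hs2 : Summable fun n : ℤ =>
        ‖(starRingEnd ℂ) (c n * Complex.exp ((n : ℂ) * (θ : ℂ) * Complex.I))‖ := by
      refine hs1.congr fun n => ?_
      rw [RCLike.norm_conj]
    have h3 := summable_mul_of_summable_norm hs1 hs2
    have h4 := h1.mul h2 h3
    have hval : h θ * (starRingEnd ℂ) (h θ) = ((‖h θ‖ ^ 2 : ℝ) : ℂ) := by
      rw [Complex.mul_conj]
      norm_cast
      simp [Complex.normSq_eq_norm_sq]
    rw [hval] at h4
    have heq : ∀ p : ℤ × ℤ,
        (c p.1 * Complex.exp ((p.1 : ℂ) * (θ : ℂ) * Complex.I)) *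
          (starRingEnd ℂ) (c p.2 * Complex.exp ((p.2 : ℂ) * (θ : ℂ) * Complex.I))
        = F p θ := by
      intro p
      rw [map_mul, ← Complex.exp_conj]
      have harg : (starRingEnd ℂ) ((p.2 : ℂ) * (θ : ℂ) * Complex.I)
          = -((p.2 : ℂ) * (θ : ℂ) * Complex.I) := by
        simp [Complex.conj_I, Complex.conj_ofReal]
        try ring
      rw [harg, hFdef]
      have : c p.1 * Complex.exp ((p.1 : ℂ) * (θ : ℂ) * Complex.I) *
          ((starRingEnd ℂ) (c p.2) * Complex.exp (-((p.2 : ℂ) * (θ : ℂ) * Complex.I)))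
          = c p.1 * (starRingEnd ℂ) (c p.2) *
            (Complex.exp ((p.1 : ℂ) * (θ : ℂ) * Complex.I) *
             Complex.exp (-((p.2 : ℂ) * (θ : ℂ) * Complex.I))) := by ring
      rw [this, ← Complex.exp_add]
      congr 2
      ring
    exact (funext heq : _) ▸ h4
  -- measurability
  have hmeas : ∀ p : ℤ × ℤ, MeasureTheory.AEStronglyMeasurable (F p)
      (MeasureTheory.volume.restrict (Set.Ioc (0:ℝ) (2 * π))) := by
    intro p
    apply Continuous.aestronglyMeasurable
    exact continuous_const.mul (Complex.continuous_exp.comp (by continuity))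
  -- uniform bound
  have hnF : ∀ (p : ℤ × ℤ) (θ : ℝ), ‖F p θ‖ = ‖c p.1‖ * ‖c p.2‖ := by
    intro p θ
    rw [hFdef]
    simp only
    rw [norm_mul, norm_mul, RCLike.norm_conj]
    rw [show ((p.1 : ℂ) - (p.2 : ℂ)) = (((p.1 - p.2 : ℤ) : ℂ)) by push_cast; ring]
    rw [hnorm1, mul_one]
  have hcnn : Summable fun n : ℤ => ‖c n‖₊ := by
    rw [← NNReal.summable_coe]
    simpa [coe_nnnorm] using hc
  have hbound : ∑' p : ℤ × ℤ, ∫⁻ θ in Set.Ioc (0:ℝ) (2 * π), ((‖F p θ‖₊ : ENNReal)) ≠ ⊤ := by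
    have hlint : ∀ p : ℤ × ℤ, ∫⁻ θ in Set.Ioc (0:ℝ) (2 * π), ((‖F p θ‖₊ : ENNReal))
        = ((‖c p.1‖₊ : ENNReal) * (‖c p.2‖₊ : ENNReal)) * ENNReal.ofReal (2 * π) := by
      intro p
      have hpt : ∀ θ : ℝ, ((‖F p θ‖₊ : ENNReal))
          = ((‖c p.1‖₊ : ENNReal) * (‖c p.2‖₊ : ENNReal)) := by
        intro θ
        rw [← ENNReal.coe_mul]
        congr 1
        apply NNReal.coe_injective
        push_cast [coe_nnnorm]
        exact hnF p θ
      rw [MeasureTheory.lintegral_congr hpt, MeasureTheory.lintegral_const,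
        MeasureTheory.Measure.restrict_apply_univ, Real.volume_Ioc, sub_zero]
    rw [tsum_congr hlint, ENNReal.tsum_mul_right]
    refine ENNReal.mul_ne_top ?_ ENNReal.ofReal_ne_top
    have : ∑' p : ℤ × ℤ, ((‖c p.1‖₊ : ENNReal) * (‖c p.2‖₊ : ENNReal))
        = (∑' n : ℤ, ((‖c n‖₊ : ENNReal))) * ∑' m : ℤ, ((‖c m‖₊ : ENNReal)) := by
      rw [ENNReal.tsum_prod']
      simp_rw [ENNReal.tsum_mul_left]
      rw [ENNReal.tsum_mul_right]
    rw [this]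
    exact ENNReal.mul_ne_top (ENNReal.tsum_coe_ne_top_iff_summable.2 hcnn)
      (ENNReal.tsum_coe_ne_top_iff_summable.2 hcnn)
  -- swap integral and sum
  have hint : (∫ θ in Set.Ioc (0:ℝ) (2 * π), (((‖h θ‖ ^ 2 : ℝ)) : ℂ))
      = ∑' p : ℤ × ℤ, ∫ θ in Set.Ioc (0:ℝ) (2 * π), F p θ := by
    rw [← MeasureTheory.integral_tsum hmeas hbound]
    exact MeasureTheory.integral_congr_ae
      (Filter.Eventually.of_forall fun θ => ((hFsum θ).tsum_eq).symm)
  -- compute each integral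
  have hI : ∀ p : ℤ × ℤ, (∫ θ in Set.Ioc (0:ℝ) (2 * π), F p θ)
      = if p.1 = p.2 then ((2 * π : ℝ) : ℂ) * (c p.1 * (starRingEnd ℂ) (c p.2)) else 0 := by
    intro p
    rw [← intervalIntegral.integral_of_le h2π0]
    by_cases hpq : p.1 = p.2
    · rw [if_pos hpq]
      have hcon : ∀ θ : ℝ, F p θ = c p.1 * (starRingEnd ℂ) (c p.2) := by
        intro θ
        rw [hFdef]
        simp [hpq]
      rw [intervalIntegral.integral_congr (fun θ _ => hcon θ),
        intervalIntegral.integral_const, sub_zero]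
      rw [Complex.real_smul]
    · rw [if_neg hpq]
      have hk : ((p.1 : ℂ) - (p.2 : ℂ)) ≠ 0 := by
        rw [sub_ne_zero]
        exact_mod_cast hpq
      have harg : ∀ θ : ℝ, F p θ = c p.1 * (starRingEnd ℂ) (c p.2) *
          Complex.exp ((((p.1 : ℂ) - (p.2 : ℂ)) * Complex.I) * (θ : ℂ)) := by
        intro θ
        rw [hFdef]
        simp only
        congr 2
        ring
      rw [intervalIntegral.integral_congr (fun θ _ => harg θ),
        intervalIntegral.integral_const_mul,
        integral_exp_mul_complex (mul_ne_zero hk Complex.I_ne_zero)]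
      have h2πI : Complex.exp (((p.1 : ℂ) - (p.2 : ℂ)) * Complex.I * ((2 * π : ℝ) : ℂ))
          = 1 := by
        rw [show ((p.1 : ℂ) - (p.2 : ℂ)) * Complex.I * ((2 * π : ℝ) : ℂ)
            = ((p.1 - p.2 : ℤ) : ℂ) * (2 * (π : ℂ) * Complex.I) by push_cast; ring]
        exact Complex.exp_int_mul_two_pi_mul_I _
      rw [h2πI]
      simp
  -- collapse double sum to the diagonal
  have hdiag : (∑' p : ℤ × ℤ,
        if p.1 = p.2 then ((2 * π : ℝ) : ℂ) * (c p.1 * (starRingEnd ℂ) (c p.2)) else 0)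
      = ∑' n : ℤ, ((2 * π : ℝ) : ℂ) * (c n * (starRingEnd ℂ) (c n)) := by
    have hinj : Function.Injective (fun n : ℤ => ((n, n) : ℤ × ℤ)) := by
      intro x y hxy
      exact (Prod.ext_iff.1 hxy).1
    have hsupp : Function.support (fun p : ℤ × ℤ =>
        if p.1 = p.2 then ((2 * π : ℝ) : ℂ) * (c p.1 * (starRingEnd ℂ) (c p.2)) else 0)
        ⊆ Set.range fun n : ℤ => ((n, n) : ℤ × ℤ) := by
      intro p hp
      simp only [Function.mem_support] at hp
      have hpq : p.1 = p.2 := by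
        by_contra hne
        exact hp (if_neg hne)
      exact ⟨p.1, Prod.ext rfl hpq⟩
    rw [← Function.Injective.tsum_eq hinj hsupp]
    simp
  -- put everything together
  have hofReal : ((∫ θ in (0:ℝ)..(2 * π), ‖h θ‖ ^ 2 : ℝ) : ℂ)
      = ((2 * π * ∑' n : ℤ, ‖c n‖ ^ 2 : ℝ) : ℂ) := by
    rw [← intervalIntegral.integral_ofReal, intervalIntegral.integral_of_le h2π0,
      hint, tsum_congr hI, hdiag]
    have hterm : ∀ n : ℤ, ((2 * π : ℝ) : ℂ) * (c n * (starRingEnd ℂ) (c n))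
        = ((2 * π : ℝ) : ℂ) * (((‖c n‖ ^ 2 : ℝ)) : ℂ) := by
      intro n
      rw [Complex.mul_conj]
      norm_cast
      simp [Complex.normSq_eq_norm_sq]
    rw [tsum_congr hterm, tsum_mul_left, ← Complex.ofReal_tsum, ← Complex.ofReal_mul,
      mul_assoc]
  have := Complex.ofReal_injective hofReal
  linarith [this]


/-- A Laurent series on an annulus is holomorphic there and its derivative
satisfies `∫₀^{2π} ‖G′(r e^{iθ})‖² dθ = 2π ∑_{n∈ℤ} n² ‖a n‖² r^{2n-2}`. -/
theorem stmt_4 (R₀ R₁ : ℝ) (hR₀ : 0 ≤ R₀) (hR : R₀ < R₁) (a : ℤ → ℂ)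
    (ha : ∀ r : ℝ, R₀ < r → r < R₁ → Summable (fun n : ℤ => ‖a n‖ * r ^ n))
    (G : ℂ → ℂ)
    (hG : ∀ z : ℂ, R₀ < ‖z‖ → ‖z‖ < R₁ →
      G z = ∑' n : ℤ, a n * z ^ n) :
    DifferentiableOn ℂ G {z : ℂ | R₀ < ‖z‖ ∧ ‖z‖ < R₁} ∧
    ∀ r : ℝ, R₀ < r → r < R₁ →
      ∫ θ in (0:ℝ)..(2 * π),
          ‖deriv G ((r : ℂ) * Complex.exp (θ * Complex.I))‖ ^ 2
        = 2 * π * ∑' n : ℤ, (n : ℝ) ^ 2 * ‖a n‖ ^ 2 * r ^ (2 * n - 2) := by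
  constructor
  · intro z hz
    exact (key_deriv hR₀ ha hG hz.1 hz.2).1.differentiableWithinAt
  · intro r hr0 hr1
    have hrpos : 0 < r := hR₀.trans_lt hr0
    have hrne : r ≠ 0 := hrpos.ne'
    set c : ℤ → ℂ := fun n => ((n + 1 : ℤ) : ℂ) * a (n + 1) * (r : ℂ) ^ n with hcdef
    have hnormc : ∀ n : ℤ, ‖c n‖ = |((n + 1 : ℤ) : ℝ)| * ‖a (n + 1)‖ * r ^ n := by
      intro n
      rw [hcdef]
      simp only
      rw [norm_mul, norm_mul, norm_zpow, Complex.norm_real, Real.norm_eq_abs,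
        _root_.abs_of_pos hrpos]
      rw [Complex.norm_intCast]
    have hsum_norm : Summable fun n : ℤ => ‖c n‖ := by
      have hA : Summable (fun n : ℤ => |(n : ℝ)| * ‖a n‖ * r ^ n) :=
        summable_deriv_aux (r₀ := (R₀ + r) / 2) (r := r) (r₁ := (r + R₁) / 2)
          (by linarith) (by linarith) (by linarith)
          (ha _ (by linarith) (by linarith)) (ha _ (by linarith) (by linarith))
      have hA' : Summable fun n : ℤ => |((n + 1 : ℤ) : ℝ)| * ‖a (n + 1)‖ * r ^ (n + 1) := by
        have := ((Equiv.addRight (1 : ℤ)).summable_iff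
          (f := fun n : ℤ => |(n : ℝ)| * ‖a n‖ * r ^ n)).2 hA
        exact this.congr fun n => by simp [Equiv.addRight]
      refine ((hA'.mul_left (1 / r)).congr fun n => ?_)
      rw [hnormc]
      rw [show (n + 1 : ℤ) = n + 1 from rfl, zpow_add_one₀ hrne]
      field_simp
    have hkey : ∀ θ : ℝ, HasSum (fun n : ℤ => c n * Complex.exp ((n : ℂ) * (θ : ℂ) * Complex.I))
        (deriv G ((r : ℂ) * Complex.exp ((θ : ℂ) * Complex.I))) := by
      intro θ
      set z : ℂ := (r : ℂ) * Complex.exp ((θ : ℂ) * Complex.I) with hzdef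
      have habs : ‖z‖ = r := by
        rw [hzdef, norm_mul, Complex.norm_real, Real.norm_eq_abs, _root_.abs_of_pos hrpos,
          Complex.norm_exp_ofReal_mul_I, mul_one]
      have hk := (key_deriv hR₀ ha hG (by rw [habs]; exact hr0) (by rw [habs]; exact hr1)).2
      have hk' := ((Equiv.addRight (1 : ℤ)).hasSum_iff
        (f := fun n : ℤ => a n * ((n : ℂ) * z ^ (n - 1))) (a := deriv G z)).2 hk
      have hk'' : HasSum (fun n : ℤ => a (n + 1) * (((n + 1 : ℤ) : ℂ) * z ^ (n + 1 - 1)))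
          (deriv G z) := by
        refine hk'.hasSum_of_sum_eq ?_
        intro u
        exact ⟨u, fun v hv => ⟨v, hv, rfl⟩⟩
      have heq : ∀ n : ℤ,
          a (n + 1) * (((n + 1 : ℤ) : ℂ) * z ^ (n + 1 - 1))
          = c n * Complex.exp ((n : ℂ) * (θ : ℂ) * Complex.I) := by
        intro n
        rw [show (n + 1 - 1 : ℤ) = n by ring, hzdef, mul_zpow, ← Complex.exp_int_mul,
          show (n : ℂ) * ((θ : ℂ) * Complex.I) = (n : ℂ) * (θ : ℂ) * Complex.I from
            (mul_assoc _ _ _).symm, hcdef]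
        ring
      exact (funext heq : _) ▸ hk''
    rw [parseval hsum_norm hkey]
    congr 1
    have hterm : ∀ n : ℤ, ‖c n‖ ^ 2
        = (fun m : ℤ => (m : ℝ) ^ 2 * ‖a m‖ ^ 2 * r ^ (2 * m - 2)) (n + 1) := by
      intro n
      simp only
      rw [hnormc, mul_pow, mul_pow, _root_.sq_abs,
        show (2 * (n + 1) - 2 : ℤ) = n + n by ring, zpow_add₀ hrne, pow_two]
      push_cast
      ring
    rw [tsum_congr hterm]
    exact Equiv.tsum_eq (Equiv.addRight (1 : ℤ))
      (fun m : ℤ => (m : ℝ) ^ 2 * ‖a m‖ ^ 2 * r ^ (2 * m - 2))
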